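/- For 1 ≤ k ≤ n, the multivariate Stirling polynomial of the first kind S_{n,k}, defined by the recurrence S_{n+1,k} = −(2n−1)·X₂·S_{n,k} + X₁·(S_{n,k−1} + Σ_{j=1}^{n−k+1} X_{j+1}·∂S_{n,k}/∂X_j) with S_{1,1}=1, S_{n,0}=0 (n>0), S_{n,k}=0 (k>n), is homogeneous of degree n−1 and isobaric of degree 2n−1−k (i.e., every monomial X₁^{r₁}⋯X_{n−k+1}^{r_{n−k+1}} appearing in S_{n,k} satisfies Σrᵢ = n−1 and Σi·rᵢ = 2n−1−k). -/

import Mathlib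

open Finset MvPolynomial

/-- The set of (n,k)-partition types: tuples (r₁,…,rₙ) (rⱼ = r (j-1)) with Σ rᵢ = k, Σ i·rᵢ = n. -/
def ptypes (n k : ℕ) : Finset (Fin n → ℕ) :=
  (Fintype.piFinset fun _ : Fin n => Finset.range (n + 1)).filter
    fun r => (∑ i, r i) = k ∧ (∑ i, (i.1 + 1) * r i) = n

/-- Denominator of the Faà di Bruno coefficient: ∏ rᵢ!·(i!)^{rᵢ}. -/
def bruDenom {n : ℕ} (r : Fin n → ℕ) : ℕ :=
  ∏ i, (r i).factorial * ((i.1 + 1).factorial) ^ (r i)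

/-- Partial exponential Bell polynomial (variable `X j` stands for X_{j+1}). -/
noncomputable def Bell (n k : ℕ) : MvPolynomial ℕ ℤ :=
  ∑ r ∈ ptypes n k,
    C ((n.factorial / bruDenom r : ℕ) : ℤ) * ∏ i, (X i.1 : MvPolynomial ℕ ℤ) ^ (r i)

/-- Associated Bell polynomial: Bell with X₁ (= `X 0`) set to 0. -/
noncomputable def BellT (n k : ℕ) : MvPolynomial ℕ ℤ :=
  aeval (fun j => if j = 0 then 0 else (X j : MvPolynomial ℕ ℤ)) (Bell n k)

/-- Signed Stirling numbers of the first kind. -/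
def s1 : ℕ → ℕ → ℤ
  | 0, 0 => 1
  | 0, _ + 1 => 0
  | _ + 1, 0 => 0
  | n + 1, k + 1 => s1 n k - n * s1 n (k + 1)

/-- Stirling numbers of the second kind. -/
def s2 : ℕ → ℕ → ℤ
  | 0, 0 => 1
  | 0, _ + 1 => 0
  | _ + 1, 0 => 0
  | n + 1, k + 1 => s2 n k + (k + 1) * s2 n (k + 1)

/-- Unsigned Stirling numbers of the first kind (cycle numbers). -/
def cyc : ℕ → ℕ → ℕ
  | 0, 0 => 1
  | 0, _ + 1 => 0
  | _ + 1, 0 => 0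
  | n + 1, k + 1 => cyc n k + n * cyc n (k + 1)

/-- First entry r₁ of a partition type (0 if the tuple is empty). -/
def firstEntry {m : ℕ} (r : Fin m → ℕ) : ℕ :=
  ∑ i ∈ Finset.univ.filter (fun i : Fin m => i.1 = 0), r i

/-- Multivariate Stirling polynomials of the first kind, via the differential recurrence. -/
noncomputable def Spoly : ℕ → ℕ → MvPolynomial ℕ ℤ
  | 0, _ => 0
  | 1, k => if k = 1 then 1 else 0
  | n + 2, k =>
    if k = 0 then 0 else
      C (-(2 * (n : ℤ) + 1)) * X 1 * Spoly (n + 1) k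
        + X 0 * (Spoly (n + 1) (k - 1)
          + ∑ j ∈ Finset.Icc 1 ((n + 1) - k + 1),
              X j * pderiv (j - 1) (Spoly (n + 1) k))

private lemma iwh_cast {w : ℕ → ℕ} {p : MvPolynomial ℕ ℤ} {d e : ℕ} (h : d = e)
    (hp : p.IsWeightedHomogeneous w d) : p.IsWeightedHomogeneous w e := h ▸ hp

private lemma spoly_zero : ∀ n, Spoly n 0 = 0
  | 0 => rfl
  | 1 => by simp [Spoly]
  | _ + 2 => by simp [Spoly]

private lemma spoly_of_lt : ∀ n k, n < k → Spoly n k = 0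
  | 0, k, _ => rfl
  | 1, k, h => by
    have : k ≠ 1 := by omega
    simp [Spoly, this]
  | n + 2, k, h => by
    have h1 : Spoly (n + 1) k = 0 := spoly_of_lt (n + 1) k (by omega)
    have h2 : Spoly (n + 1) (k - 1) = 0 := spoly_of_lt (n + 1) (k - 1) (by omega)
    have hk : k ≠ 0 := by omega
    simp [Spoly, hk, h1, h2]

private lemma pderiv_as_sum (p : MvPolynomial ℕ ℤ) (i : ℕ) :
    pderiv i p = ∑ m ∈ p.support,
      monomial (m - Finsupp.single i 1) (coeff m p * (m i : ℤ)) := by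
  conv_lhs => rw [p.as_sum]
  rw [map_sum]
  exact Finset.sum_congr rfl fun m _ => pderiv_monomial

private lemma isWH_pderiv {w : ℕ → ℕ} {p : MvPolynomial ℕ ℤ} {d : ℕ} (i : ℕ)
    (hp : p.IsWeightedHomogeneous w d) (e : ℕ) (he : e + w i = d) :
    (pderiv i p).IsWeightedHomogeneous w e := by
  rw [pderiv_as_sum]
  apply IsWeightedHomogeneous.sum
  intro m hm
  rcases Nat.eq_zero_or_pos (m i) with h0 | h1
  · rw [h0]
    simpa using isWeightedHomogeneous_zero ℤ w e
  · apply isWeightedHomogeneous_monomial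
    have hd : Finsupp.weight w m = d := hp (MvPolynomial.mem_support_iff.mp hm)
    have hsplit : m = (m - Finsupp.single i 1) + Finsupp.single i 1 := by
      ext j
      rcases eq_or_ne j i with rfl | hji
      · simp only [Finsupp.add_apply, Finsupp.tsub_apply, Finsupp.single_eq_same]
        omega
      · simp [Finsupp.tsub_apply, Finsupp.single_eq_of_ne' (Ne.symm hji)]
    have hw : Finsupp.weight w ((m - Finsupp.single i 1) + Finsupp.single i 1) = d := by
      rw [← hsplit]; exact hd
    rw [map_add] at hw
    have hws : (Finsupp.weight w) (Finsupp.single i 1) = w i := by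
      rw [Finsupp.weight_apply, Finsupp.sum_single_index] <;> simp
    omega

private lemma pderiv_eq_zero_of_lt {w : ℕ → ℕ} {p : MvPolynomial ℕ ℤ} {d : ℕ} (i : ℕ)
    (hp : p.IsWeightedHomogeneous w d) (h : d < w i) : pderiv i p = 0 := by
  rw [pderiv_as_sum]
  apply Finset.sum_eq_zero
  intro m hm
  have hd : Finsupp.weight w m = d := hp (MvPolynomial.mem_support_iff.mp hm)
  have h0 : m i = 0 := by
    by_contra hmi
    have hmem : i ∈ m.support := Finsupp.mem_support_iff.mpr hmi
    have hle : w i * m i ≤ Finsupp.weight w m := by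
      rw [Finsupp.weight_apply, Finsupp.sum]
      calc w i * m i = m i • w i := by rw [smul_eq_mul]; ring
      _ ≤ ∑ j ∈ m.support, m j • w j :=
          Finset.single_le_sum (f := fun j => m j • w j) (fun j _ => Nat.zero_le _) hmem
    have : 1 ≤ m i := Nat.one_le_iff_ne_zero.mpr hmi
    nlinarith
  simp [h0]

private lemma isWH_X_mul_pderiv {w : ℕ → ℕ} {p : MvPolynomial ℕ ℤ} {d : ℕ} (i j : ℕ)
    (hp : p.IsWeightedHomogeneous w d) (e : ℕ) (he : e + w i = d + w j) :
    (X j * pderiv i p : MvPolynomial ℕ ℤ).IsWeightedHomogeneous w e := by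
  rcases le_or_gt (w i) d with h | h
  · exact iwh_cast (by omega)
      ((isWeightedHomogeneous_X ℤ w j).mul (isWH_pderiv i hp (d - w i) (by omega)))
  · rw [pderiv_eq_zero_of_lt i hp h, mul_zero]
    exact isWeightedHomogeneous_zero ℤ w e

private lemma step_aux {w : ℕ → ℕ} {n k : ℕ} (hk : k ≠ 0) {dS dS' D : ℕ}
    (hS : (Spoly (n + 1) k).IsWeightedHomogeneous w dS)
    (hS' : (Spoly (n + 1) (k - 1)).IsWeightedHomogeneous w dS')
    (h1 : 0 + w 1 + dS = D)
    (h2 : w 0 + dS' = D)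
    (h3 : ∀ j, 1 ≤ j → j ≤ (n + 1) - k + 1 → dS' + w (j - 1) = dS + w j) :
    (Spoly (n + 2) k).IsWeightedHomogeneous w D := by
  rw [Spoly, if_neg hk]
  have t1 : (C (-(2 * (n : ℤ) + 1)) * X 1 * Spoly (n + 1) k).IsWeightedHomogeneous w D :=
    iwh_cast h1 (((isWeightedHomogeneous_C w _).mul (isWeightedHomogeneous_X ℤ w 1)).mul hS)
  have t3 : ∀ j ∈ Finset.Icc 1 ((n + 1) - k + 1),
      (X j * pderiv (j - 1) (Spoly (n + 1) k) : MvPolynomial ℕ ℤ).IsWeightedHomogeneous w dS' := by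
    intro j hj
    rw [Finset.mem_Icc] at hj
    exact isWH_X_mul_pderiv (j - 1) j hS dS' (h3 j hj.1 hj.2)
  exact t1.add (iwh_cast h2 ((isWeightedHomogeneous_X ℤ w 0).mul
    (hS'.add (IsWeightedHomogeneous.sum _ _ _ t3))))

private lemma spoly_WH : ∀ n k, 1 ≤ k → k ≤ n →
    (Spoly n k).IsWeightedHomogeneous (fun _ => 1) (n - 1) ∧
    (Spoly n k).IsWeightedHomogeneous (fun i => i + 1) (2 * n - 1 - k)
  | 0, k, h, h' => absurd (h.trans h') (by omega)
  | 1, k, h, h' => by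
    have hk1 : k = 1 := by omega
    subst hk1
    constructor <;>
    · simp only [Spoly, if_pos rfl]
      exact iwh_cast (by omega) (isWeightedHomogeneous_one ℤ _)
  | n + 2, k, h, h' => by
    have hk0 : k ≠ 0 := by omega
    by_cases hc : k ≤ n + 1
    · obtain ⟨hS1, hS2⟩ := spoly_WH (n + 1) k h hc
      have hS'1 : (Spoly (n + 1) (k - 1)).IsWeightedHomogeneous (fun _ => 1) n := by
        rcases eq_or_lt_of_le h with h1 | h1
        · have hz : Spoly (n + 1) (k - 1) = 0 := by rw [← h1]; exact spoly_zero _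
          rw [hz]
          exact isWeightedHomogeneous_zero ℤ (fun _ => (1:ℕ)) n
        · exact iwh_cast (by omega) (spoly_WH (n + 1) (k - 1) (by omega) (by omega)).1
      have hS'2 : (Spoly (n + 1) (k - 1)).IsWeightedHomogeneous (fun i => i + 1)
          (2 * n + 2 - k) := by
        rcases eq_or_lt_of_le h with h1 | h1
        · have hz : Spoly (n + 1) (k - 1) = 0 := by rw [← h1]; exact spoly_zero _
          rw [hz]
          exact isWeightedHomogeneous_zero ℤ (fun i => i + 1) (2 * n + 2 - k)
        · exact iwh_cast (by omega) (spoly_WH (n + 1) (k - 1) (by omega) (by omega)).2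
      constructor
      · exact step_aux (dS := n) (dS' := n) hk0 (iwh_cast (by omega) hS1) hS'1
          (by omega) (by omega) (fun j hj1 hj2 => by omega)
      · exact step_aux (dS := 2 * n + 1 - k) (dS' := 2 * n + 2 - k) hk0
          (iwh_cast (by omega) hS2) hS'2 (by omega) (by omega) (fun j hj1 hj2 => by omega)
    · have hk2 : k = n + 2 := by omega
      subst hk2
      have hz : Spoly (n + 1) (n + 2) = 0 := spoly_of_lt _ _ (by omega)
      obtain ⟨hP1, hP2⟩ := spoly_WH (n + 1) (n + 1) (by omega) le_rfl
      have heq : Spoly (n + 2) (n + 2) = X 0 * Spoly (n + 1) (n + 1) := by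
        rw [Spoly, if_neg hk0, hz]
        simp
      rw [heq]
      constructor
      · exact iwh_cast (by omega) ((isWeightedHomogeneous_X ℤ (fun _ => 1) 0).mul hP1)
      · exact iwh_cast (by omega) ((isWeightedHomogeneous_X ℤ (fun i => i + 1) 0).mul hP2)

theorem spoly_homogeneous_isobaric (n k : ℕ) (hk : 1 ≤ k) (hkn : k ≤ n)
    (m : ℕ →₀ ℕ) (hm : m ∈ (Spoly n k).support) :
    (∑ i ∈ m.support, m i) = n - 1 ∧ (∑ i ∈ m.support, (i + 1) * m i) = 2 * n - 1 - k := by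
  obtain ⟨h1, h2⟩ := spoly_WH n k hk hkn
  have hm' : coeff m (Spoly n k) ≠ 0 := MvPolynomial.mem_support_iff.mp hm
  constructor
  · have := h1 hm'
    rw [Finsupp.weight_apply, Finsupp.sum] at this
    simpa [smul_eq_mul] using this
  · have := h2 hm'
    rw [Finsupp.weight_apply, Finsupp.sum] at this
    rw [← this]
    exact Finset.sum_congr rfl fun i _ => by rw [smul_eq_mul, mul_comm]
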